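/- For every integer n ≥ 4, the minimum number of edges in a connected 4*-dense graph on n vertices is 2n−2 if n ≡ 1 (mod 3), and 2n−1 otherwise. -/

import Mathlib

/-- A graph `G` is `k`-dense if every two adjacent vertices have at least `k - 2`
common neighbors. -/
def kDense {V : Type*} (G : SimpleGraph V) (k : ℕ) : Prop :=
  ∀ u v : V, G.Adj u v → k - 2 ≤ (G.neighborSet u ∩ G.neighborSet v).ncard

/-- A graph is `k*`-dense if it is `k`-dense but not `(k+1)`-dense. -/
def kStarDense {V : Type*} (G : SimpleGraph V) (k : ℕ) : Prop :=
  kDense G k ∧ ¬ kDense G (k + 1)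

open Finset

namespace FourDenseProof


variable {V : Type*} [Fintype V] [DecidableEq V]

def supp (F : Finset (Sym2 V)) : Finset V := univ.filter (fun v => ∃ e ∈ F, v ∈ e)

lemma mem_supp {F : Finset (Sym2 V)} {v : V} : v ∈ supp F ↔ ∃ e ∈ F, v ∈ e := by
  simp [supp]

def nbrs (F : Finset (Sym2 V)) (v : V) : Finset V := univ.filter (fun w => s(v, w) ∈ F)

lemma mem_nbrs {F : Finset (Sym2 V)} {v w : V} : w ∈ nbrs F v ↔ s(v, w) ∈ F := by
  simp [nbrs]

lemma mem_supp_of_edge {F : Finset (Sym2 V)} {v w : V} (h : s(v,w) ∈ F) : v ∈ supp F :=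
  mem_supp.2 ⟨s(v,w), h, by simp⟩

lemma mem_supp_of_edge' {F : Finset (Sym2 V)} {v w : V} (h : s(v,w) ∈ F) : w ∈ supp F :=
  mem_supp.2 ⟨s(v,w), h, by simp⟩

inductive Grown : Finset (Sym2 V) → Prop
  | base (a b c d : V) (hab : a ≠ b) (hac : a ≠ c) (had : a ≠ d) (hbc : b ≠ c)
      (hbd : b ≠ d) (hcd : c ≠ d) :
      Grown {s(a,b), s(a,c), s(a,d), s(b,c), s(b,d), s(c,d)}
  | step (F : Finset (Sym2 V)) (x y z : V) (hxy : s(x,y) ∈ F) (hxz : x ≠ z) (hyz : y ≠ z)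
      (hF : Grown F) : Grown (insert s(x,z) (insert s(y,z) F))

lemma grown_nondiag {F : Finset (Sym2 V)} (h : Grown F) : ∀ e ∈ F, ¬ e.IsDiag := by
  induction h with
  | base a b c d hab hac had hbc hbd hcd =>
    intro e he
    simp only [mem_insert, mem_singleton] at he
    rcases he with rfl|rfl|rfl|rfl|rfl|rfl <;> simpa [Sym2.isDiag_iff_proj_eq]
  | step F x y z hxy hxz hyz hF ih =>
    intro e he
    simp only [mem_insert] at he
    rcases he with rfl|rfl|he
    · simpa [Sym2.isDiag_iff_proj_eq]
    · simpa [Sym2.isDiag_iff_proj_eq]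
    · exact ih e he

lemma grown_card {F : Finset (Sym2 V)} (h : Grown F) :
    2 * (supp F).card ≤ F.card + 2 ∧
      (F.card + 2 = 2 * (supp F).card →
        ((supp F).card = 4 ∨ ∃ v ∈ supp F, (nbrs F v).card ≤ 2)) := by
  induction h with
  | base a b c d hab hac had hbc hbd hcd =>
    have hsupp : supp {s(a,b), s(a,c), s(a,d), s(b,c), s(b,d), s(c,d)} = {a, b, c, d} := by
      ext v
      simp only [mem_supp, mem_insert, mem_singleton]
      constructor
      · rintro ⟨e, he, hv⟩
        rcases he with rfl|rfl|rfl|rfl|rfl|rfl <;>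
          rcases Sym2.mem_iff.1 hv with rfl|rfl <;> tauto
      · rintro (h|h|h|h)
        · exact ⟨s(a,b), Or.inl rfl, by simp [h]⟩
        · exact ⟨s(a,b), Or.inl rfl, by simp [h]⟩
        · exact ⟨s(a,c), by simp, by simp [h]⟩
        · exact ⟨s(a,d), by simp, by simp [h]⟩
    have hc1 : ({a,b,c,d} : Finset V).card = 4 := by
      rw [card_insert_of_notMem (by simp [hab, hac, had]),
        card_insert_of_notMem (by simp [hbc, hbd]),
        card_insert_of_notMem (by simp [hcd]), card_singleton]
    have hc2 : ({s(a,b), s(a,c), s(a,d), s(b,c), s(b,d), s(c,d)} : Finset (Sym2 V)).card = 6 := by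
      rw [card_insert_of_notMem (by simp [Sym2.eq_iff]; tauto),
        card_insert_of_notMem (by simp [Sym2.eq_iff]; tauto),
        card_insert_of_notMem (by simp [Sym2.eq_iff]; tauto),
        card_insert_of_notMem (by simp [Sym2.eq_iff]; tauto),
        card_insert_of_notMem (by simp [Sym2.eq_iff]; tauto), card_singleton]
    rw [hsupp, hc1, hc2]
    exact ⟨by norm_num, fun _ => Or.inl rfl⟩
  | step F x y z hxy hxz hyz hF ih =>
    have hxy' : x ≠ y := by
      intro h
      exact grown_nondiag hF s(x,y) hxy (by simp [Sym2.isDiag_iff_proj_eq, h])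
    by_cases hz : z ∈ supp F
    · have hsub : F ⊆ insert s(x,z) (insert s(y,z) F) := by intro e he; simp [he]
      have hsupp : supp (insert s(x,z) (insert s(y,z) F)) = supp F := by
        ext v
        simp only [mem_supp, mem_insert]
        constructor
        · rintro ⟨e, (rfl|rfl|he), hv⟩
          · rcases Sym2.mem_iff.1 hv with rfl|rfl
            · exact mem_supp.1 (mem_supp_of_edge hxy)
            · exact mem_supp.1 hz
          · rcases Sym2.mem_iff.1 hv with rfl|rfl
            · exact mem_supp.1 (mem_supp_of_edge' hxy)
            · exact mem_supp.1 hz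
          · exact ⟨e, he, hv⟩
        · rintro ⟨e, he, hv⟩; exact ⟨e, by tauto, hv⟩
      have hcard : F.card ≤ (insert s(x,z) (insert s(y,z) F)).card := card_le_card hsub
      constructor
      · rw [hsupp]; omega
      · intro heq
        rw [hsupp] at heq
        have hle : (insert s(x,z) (insert s(y,z) F)).card ≤ F.card := by omega
        have hFeq : insert s(x,z) (insert s(y,z) F) = F :=
          (eq_of_subset_of_card_le hsub hle).symm
        rw [hFeq] at heq ⊢
        exact ih.2 heq
    · -- new vertex z
      have hxF : x ∈ supp F := mem_supp_of_edge hxy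
      have hyF : y ∈ supp F := mem_supp_of_edge' hxy
      have hznotin : ∀ w, s(w, z) ∉ F := fun w h => hz (mem_supp_of_edge' h)
      have hxzF : s(x,z) ∉ F := hznotin x
      have hyzF : s(y,z) ∉ F := hznotin y
      have hne : s(x,z) ≠ s(y,z) := by
        intro h
        rw [Sym2.eq_iff] at h
        rcases h with ⟨rfl, -⟩|⟨rfl, rfl⟩
        · exact hxy' rfl
        · exact hxz rfl
      have hcard : (insert s(x,z) (insert s(y,z) F)).card = F.card + 2 := by
        rw [card_insert_of_notMem (by simp [hne, hxzF]), card_insert_of_notMem hyzF]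
      have hsupp : supp (insert s(x,z) (insert s(y,z) F)) = insert z (supp F) := by
        ext v
        simp only [mem_supp, mem_insert]
        constructor
        · rintro ⟨e, (rfl|rfl|he), hv⟩
          · rcases Sym2.mem_iff.1 hv with rfl|rfl
            · exact Or.inr (mem_supp.1 hxF)
            · exact Or.inl rfl
          · rcases Sym2.mem_iff.1 hv with rfl|rfl
            · exact Or.inr (mem_supp.1 hyF)
            · exact Or.inl rfl
          · exact Or.inr ⟨e, he, hv⟩
        · rintro (h|⟨e, he, hv'⟩)
          · exact ⟨s(x,z), Or.inl rfl, by simp [h]⟩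
          · exact ⟨e, by tauto, hv'⟩
      have hsc : (supp (insert s(x,z) (insert s(y,z) F))).card = (supp F).card + 1 := by
        rw [hsupp, card_insert_of_notMem hz]
      constructor
      · rw [hsc, hcard]; omega
      · intro heq
        right
        refine ⟨z, by rw [hsupp]; exact mem_insert_self _ _, ?_⟩
        have : nbrs (insert s(x,z) (insert s(y,z) F)) z ⊆ {x, y} := by
          intro w hw
          rw [mem_nbrs] at hw
          simp only [mem_insert] at hw
          rcases hw with h|h|h
          · rw [Sym2.eq_iff] at h
            rcases h with ⟨rfl,-⟩|⟨-,rfl⟩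
            · exact absurd rfl hxz.symm
            · simp
          · rw [Sym2.eq_iff] at h
            rcases h with ⟨rfl,-⟩|⟨-,rfl⟩
            · exact absurd rfl hyz.symm
            · simp
          · exact absurd h (hznotin w ∘ (Sym2.eq_swap ▸ id))
        calc (nbrs (insert s(x,z) (insert s(y,z) F)) z).card ≤ ({x,y} : Finset V).card :=
              card_le_card this
          _ ≤ 2 := card_insert_le _ _ |>.trans (by simp)


/-- handshake: summing local degrees of an edge finset -/
lemma handshake {F : Finset (Sym2 V)} (hF : ∀ e ∈ F, ¬ e.IsDiag) :
    ∑ v : V, (nbrs F v).card = 2 * F.card := by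
  classical
  set P : Finset (V × V) := univ.filter (fun p => s(p.1, p.2) ∈ F) with hP
  have h1 : P.card = ∑ v : V, (nbrs F v).card := by
    rw [card_eq_sum_card_fiberwise (f := Prod.fst) (t := univ) (fun x _ => mem_univ _)]
    refine Finset.sum_congr rfl (fun v _ => ?_)
    have : P.filter (fun p => p.1 = v) = (nbrs F v).image (fun w => (v, w)) := by
      ext ⟨a, b⟩
      simp only [hP, mem_filter, mem_univ, true_and, mem_image, mem_nbrs]
      constructor
      · rintro ⟨hab, rfl⟩; exact ⟨b, hab, rfl⟩
      · rintro ⟨w, hw, h⟩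
        obtain ⟨rfl, rfl⟩ := Prod.mk.injEq .. ▸ h
        exact ⟨hw, rfl⟩
      
    rw [this, card_image_of_injective _ (fun a b h => (Prod.mk.injEq .. ▸ h).2)]
  have hfib : ∀ x ∈ P, s(x.1, x.2) ∈ F := fun x hx => (mem_filter.1 hx).2
  have h2 : P.card = ∑ e ∈ F, (P.filter (fun p => s(p.1, p.2) = e)).card :=
    card_eq_sum_card_fiberwise hfib
  have h3 : ∀ e ∈ F, (P.filter (fun p => s(p.1, p.2) = e)).card = 2 := by
    intro e he
    induction e with
    | _ a b =>
      have hne : a ≠ b := by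
        intro h; exact hF _ he (by simp [Sym2.isDiag_iff_proj_eq, h])
      have : P.filter (fun p => s(p.1, p.2) = s(a,b)) = {(a,b), (b,a)} := by
        ext ⟨u, w⟩
        simp only [hP, mem_filter, mem_univ, true_and, mem_insert, mem_singleton,
          Sym2.eq_iff, Prod.mk.injEq]
        constructor
        · rintro ⟨hm, (⟨rfl, rfl⟩|⟨rfl, rfl⟩)⟩
          · exact Or.inl ⟨rfl, rfl⟩
          · exact Or.inr ⟨rfl, rfl⟩
        · rintro (⟨rfl, rfl⟩|⟨rfl, rfl⟩)
          · exact ⟨he, Or.inl ⟨rfl, rfl⟩⟩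
          · exact ⟨Sym2.eq_swap ▸ he, Or.inr ⟨rfl, rfl⟩⟩
      rw [this, card_insert_of_notMem (by simp [Prod.mk.injEq, hne]), card_singleton]
  rw [Finset.sum_congr rfl h3, Finset.sum_const, smul_eq_mul, mul_comm] at h2
  omega

section Graph

open scoped Classical

variable {G : SimpleGraph V}

/-- every edge lies in at least two triangles -/
def Dense2 (G : SimpleGraph V) : Prop :=
  ∀ u v, G.Adj u v → 2 ≤ ((G.neighborFinset u) ∩ (G.neighborFinset v)).card

def IsTri (G : SimpleGraph V) (x y z : V) : Prop := G.Adj x y ∧ G.Adj x z ∧ G.Adj y z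

def SameTri (G : SimpleGraph V) (e f : Sym2 V) : Prop :=
  ∃ x y z, IsTri G x y z ∧ (e = s(x,y) ∨ e = s(x,z) ∨ e = s(y,z)) ∧
    (f = s(x,y) ∨ f = s(x,z) ∨ f = s(y,z))

lemma sameTri_symm (G : SimpleGraph V) : Symmetric (SameTri G) :=
  fun _ _ ⟨x,y,z,ht,he,hf⟩ => ⟨x,y,z,ht,hf,he⟩

def TriConn (G : SimpleGraph V) : Sym2 V → Sym2 V → Prop :=
  Relation.ReflTransGen (SameTri G)

lemma triConn_symm (G : SimpleGraph V) {e f : Sym2 V} (h : TriConn G e f) : TriConn G f e :=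
  haveI : Std.Symm (SameTri G) := ⟨sameTri_symm G⟩
  (Relation.ReflTransGen.stdSymm (r := SameTri G)).symm _ _ h

/-- the triangle-component of an edge -/
noncomputable def cl (G : SimpleGraph V) (e : Sym2 V) : Finset (Sym2 V) :=
  G.edgeFinset.filter (fun f => TriConn G e f)

lemma cl_subset {e : Sym2 V} : cl G e ⊆ G.edgeFinset := filter_subset _ _

lemma mem_cl_self {e : Sym2 V} (he : e ∈ G.edgeFinset) : e ∈ cl G e :=
  mem_filter.2 ⟨he, Relation.ReflTransGen.refl⟩

lemma adj_of_mem_edgeFinset {u v : V} (h : s(u,v) ∈ G.edgeFinset) : G.Adj u v := by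
  rwa [SimpleGraph.mem_edgeFinset, SimpleGraph.mem_edgeSet] at h

lemma adj_of_mem_cl {e : Sym2 V} {u v : V} (h : s(u,v) ∈ cl G e) : G.Adj u v :=
  adj_of_mem_edgeFinset (cl_subset h)

lemma mem_cl_of_sameTri {e f g : Sym2 V} (hf : f ∈ cl G e) (hfg : SameTri G f g)
    (hg : g ∈ G.edgeFinset) : g ∈ cl G e :=
  mem_filter.2 ⟨hg, Relation.ReflTransGen.tail (mem_filter.1 hf).2 hfg⟩

lemma cl_eq_cl {e f : Sym2 V} (hf : f ∈ cl G e) : cl G f = cl G e := by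
  have h1 : TriConn G e f := (mem_filter.1 hf).2
  ext g
  simp only [cl, mem_filter]
  exact ⟨fun ⟨hg, h2⟩ => ⟨hg, h1.trans h2⟩, fun ⟨hg, h2⟩ => ⟨hg, (triConn_symm G h1).trans h2⟩⟩

/-- closing a triangle over an edge of a component stays in the component -/
lemma common_mem_cl {e : Sym2 V} {u v w : V} (huv : s(u,v) ∈ cl G e)
    (hw1 : G.Adj u w) (hw2 : G.Adj v w) : s(u,w) ∈ cl G e ∧ s(v,w) ∈ cl G e := by
  have hadj : G.Adj u v := adj_of_mem_cl huv
  have htri : IsTri G u v w := ⟨hadj, hw1, hw2⟩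
  constructor
  · exact mem_cl_of_sameTri huv ⟨u, v, w, htri, Or.inl rfl, Or.inr (Or.inl rfl)⟩
      (by rw [SimpleGraph.mem_edgeFinset, SimpleGraph.mem_edgeSet]; exact hw1)
  · exact mem_cl_of_sameTri huv ⟨u, v, w, htri, Or.inl rfl, Or.inr (Or.inr rfl)⟩
      (by rw [SimpleGraph.mem_edgeFinset, SimpleGraph.mem_edgeSet]; exact hw2)

lemma common_sub_nbrs {e : Sym2 V} {v x : V} (hvx : s(v,x) ∈ cl G e) :
    (G.neighborFinset v) ∩ (G.neighborFinset x) ⊆ (nbrs (cl G e) v).erase x := by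
  intro w hw
  rw [mem_inter, SimpleGraph.mem_neighborFinset, SimpleGraph.mem_neighborFinset] at hw
  rw [mem_erase, mem_nbrs]
  exact ⟨fun h => (G.ne_of_adj hw.2) (h ▸ rfl), (common_mem_cl hvx hw.1 hw.2).1⟩

lemma deg_ge_three (hD : Dense2 G) {e : Sym2 V} {v : V} (hv : v ∈ supp (cl G e)) :
    3 ≤ (nbrs (cl G e) v).card := by
  obtain ⟨f, hf, hvf⟩ := mem_supp.1 hv
  obtain ⟨u, rfl⟩ := Sym2.mem_iff_exists.1 hvf
  have hadj : G.Adj v u := adj_of_mem_cl hf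
  have h2 : 2 ≤ ((G.neighborFinset v) ∩ (G.neighborFinset u)).card := hD v u hadj
  have hsub := common_sub_nbrs (G := G) hf
  have hu : u ∈ nbrs (cl G e) v := mem_nbrs.2 hf
  have h3 : 2 ≤ ((nbrs (cl G e) v).erase u).card := le_trans h2 (card_le_card hsub)
  have := card_erase_add_one (mem_nbrs.2 hf)
  omega

lemma k4_of_deg3 (hD : Dense2 G) {e : Sym2 V} {v : V} (hv : v ∈ supp (cl G e))
    (h3 : (nbrs (cl G e) v).card = 3) :
    ∃ a b c : V, (v ≠ a ∧ v ≠ b ∧ v ≠ c ∧ a ≠ b ∧ a ≠ c ∧ b ≠ c) ∧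
      ({s(v,a),s(v,b),s(v,c),s(a,b),s(a,c),s(b,c)} : Finset (Sym2 V)) ⊆ cl G e := by
  obtain ⟨a, b, c, hab, hac, hbc, hN⟩ := card_eq_three.1 h3
  have haN : a ∈ nbrs (cl G e) v := by rw [hN]; simp
  have hbN : b ∈ nbrs (cl G e) v := by rw [hN]; simp
  have hcN : c ∈ nbrs (cl G e) v := by rw [hN]; simp
  have hva : s(v,a) ∈ cl G e := mem_nbrs.1 haN
  have hvb : s(v,b) ∈ cl G e := mem_nbrs.1 hbN
  have hvc : s(v,c) ∈ cl G e := mem_nbrs.1 hcN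
  have hvna : v ≠ a := G.ne_of_adj (adj_of_mem_cl hva)
  have hvnb : v ≠ b := G.ne_of_adj (adj_of_mem_cl hvb)
  have hvnc : v ≠ c := G.ne_of_adj (adj_of_mem_cl hvc)
  -- common neighbours of v and a are exactly {b, c}
  have key : ∀ x : V, x ∈ nbrs (cl G e) v →
      ((nbrs (cl G e) v).erase x) ⊆ G.neighborFinset x := by
    intro x hxN
    have hvx : s(v,x) ∈ cl G e := mem_nbrs.1 hxN
    have hsub := common_sub_nbrs (G := G) hvx
    have hcard : 2 ≤ ((G.neighborFinset v) ∩ (G.neighborFinset x)).card :=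
      hD v x (adj_of_mem_cl hvx)
    have herase : ((nbrs (cl G e) v).erase x).card = 2 := by
      rw [card_erase_of_mem hxN, h3]
    have := eq_of_subset_of_card_le hsub (by omega)
    intro w hw
    rw [← this] at hw
    exact (mem_inter.1 hw).2
  have hAB : G.Adj a b := by
    have : b ∈ (nbrs (cl G e) v).erase a := by rw [hN]; simp [hab.symm, hbc]
    exact (SimpleGraph.mem_neighborFinset ..).1 (key a haN this)
  have hAC : G.Adj a c := by
    have : c ∈ (nbrs (cl G e) v).erase a := by rw [hN]; simp [hac.symm]
    exact (SimpleGraph.mem_neighborFinset ..).1 (key a haN this)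
  have hBC : G.Adj b c := by
    have : c ∈ (nbrs (cl G e) v).erase b := by rw [hN]; simp [hbc.symm]
    exact (SimpleGraph.mem_neighborFinset ..).1 (key b hbN this)
  refine ⟨a, b, c, ⟨hvna, hvnb, hvnc, hab, hac, hbc⟩, ?_⟩
  intro f hf
  simp only [mem_insert, mem_singleton] at hf
  have hab' : s(a,b) ∈ cl G e := (common_mem_cl hva (adj_of_mem_cl hvb) hAB).2
  have hac' : s(a,c) ∈ cl G e := (common_mem_cl hva (adj_of_mem_cl hvc) hAC).2
  have hbc' : s(b,c) ∈ cl G e := (common_mem_cl hvb (adj_of_mem_cl hvc) hBC).2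
  rcases hf with rfl|rfl|rfl|rfl|rfl|rfl <;> assumption

/-- a component containing a degree-3 vertex is grown from a K4 -/
lemma class_grown (hD : Dense2 G) {e : Sym2 V} {v : V} (hv : v ∈ supp (cl G e))
    (h3 : (nbrs (cl G e) v).card = 3) : Grown (cl G e) := by
  obtain ⟨a, b, c, ⟨h1,h2,h3',h4,h5,h6⟩, hsub⟩ := k4_of_deg3 hD hv h3
  set F0 : Finset (Sym2 V) := {s(v,a),s(v,b),s(v,c),s(a,b),s(a,c),s(b,c)} with hF0
  have hgF0 : Grown F0 := Grown.base v a b c h1 h2 h3' h4 h5 h6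
  set S := (cl G e).powerset.filter (fun F => Grown F) with hS
  have hF0S : F0 ∈ S := mem_filter.2 ⟨mem_powerset.2 hsub, hgF0⟩
  obtain ⟨Fm, hFmS, hmax⟩ := exists_max_image S card ⟨F0, hF0S⟩
  have hFmsub : Fm ⊆ cl G e := mem_powerset.1 (mem_filter.1 hFmS).1
  have hFmg : Grown Fm := (mem_filter.1 hFmS).2
  -- maximal grown subfamily is closed under sharing a triangle
  have hclosed : ∀ g ∈ Fm, ∀ h, SameTri G g h → h ∈ Fm := by
    intro g hg h hgh
    obtain ⟨x, y, z, htri, hge, hhe⟩ := hgh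
    obtain ⟨hxy, hxz, hyz⟩ := htri
    have hmem : ∀ F' : Finset (Sym2 V), Grown F' → Fm ⊆ F' → F' ⊆ cl G e → F' = Fm := by
      intro F' hg' hsub' hsub''
      have : F' ∈ S := mem_filter.2 ⟨mem_powerset.2 hsub'', hg'⟩
      exact (eq_of_subset_of_card_le hsub' (hmax F' this)).symm
    have hgcl : g ∈ cl G e := hFmsub hg
    have edge_xy : s(x,y) ∈ G.edgeFinset := by
      rw [SimpleGraph.mem_edgeFinset, SimpleGraph.mem_edgeSet]; exact hxy
    have edge_xz : s(x,z) ∈ G.edgeFinset := by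
      rw [SimpleGraph.mem_edgeFinset, SimpleGraph.mem_edgeSet]; exact hxz
    have edge_yz : s(y,z) ∈ G.edgeFinset := by
      rw [SimpleGraph.mem_edgeFinset, SimpleGraph.mem_edgeSet]; exact hyz
    have tri : IsTri G x y z := ⟨hxy, hxz, hyz⟩
    have hcl_xy : s(x,y) ∈ cl G e := mem_cl_of_sameTri hgcl ⟨x,y,z,tri,hge,Or.inl rfl⟩ edge_xy
    have hcl_xz : s(x,z) ∈ cl G e :=
      mem_cl_of_sameTri hgcl ⟨x,y,z,tri,hge,Or.inr (Or.inl rfl)⟩ edge_xz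
    have hcl_yz : s(y,z) ∈ cl G e :=
      mem_cl_of_sameTri hgcl ⟨x,y,z,tri,hge,Or.inr (Or.inr rfl)⟩ edge_yz
    rcases hge with rfl|rfl|rfl
    · -- g = s(x,y)
      set F' := insert s(x,z) (insert s(y,z) Fm) with hF'
      have hg' : Grown F' := Grown.step Fm x y z hg hxz.ne hyz.ne hFmg
      have hsub' : Fm ⊆ F' := fun f hf => by simp [hF', hf]
      have hsub'' : F' ⊆ cl G e := by
        intro f hf
        rcases mem_insert.1 hf with rfl|hf'
        · exact hcl_xz
        · rcases mem_insert.1 hf' with rfl|hf''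
          · exact hcl_yz
          · exact hFmsub hf''
      have hFF : F' = Fm := hmem F' hg' hsub' hsub''
      rw [← hFF]
      rcases hhe with rfl|rfl|rfl
      · exact hsub' hg
      · simp [hF']
      · simp [hF']
    · -- g = s(x,z)
      set F' := insert s(x,y) (insert s(z,y) Fm) with hF'
      have hg' : Grown F' := Grown.step Fm x z y hg hxy.ne hyz.symm.ne hFmg
      have hsub' : Fm ⊆ F' := fun f hf => by simp [hF', hf]
      have hsub'' : F' ⊆ cl G e := by
        intro f hf
        rcases mem_insert.1 hf with rfl|hf'
        · exact hcl_xy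
        · rcases mem_insert.1 hf' with rfl|hf''
          · exact Sym2.eq_swap ▸ hcl_yz
          · exact hFmsub hf''
      have hFF : F' = Fm := hmem F' hg' hsub' hsub''
      rw [← hFF]
      rcases hhe with rfl|rfl|rfl
      · simp [hF']
      · exact hsub' hg
      · have : s(y,z) = s(z,y) := Sym2.eq_swap
        rw [this]; simp [hF']
    · -- g = s(y,z)
      set F' := insert s(y,x) (insert s(z,x) Fm) with hF'
      have hg' : Grown F' := Grown.step Fm y z x hg hxy.symm.ne hxz.symm.ne hFmg
      have hsub' : Fm ⊆ F' := fun f hf => by simp [hF', hf]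
      have hsub'' : F' ⊆ cl G e := by
        intro f hf
        rcases mem_insert.1 hf with rfl|hf'
        · exact Sym2.eq_swap ▸ hcl_xy
        · rcases mem_insert.1 hf' with rfl|hf''
          · exact Sym2.eq_swap ▸ hcl_xz
          · exact hFmsub hf''
      have hFF : F' = Fm := hmem F' hg' hsub' hsub''
      rw [← hFF]
      rcases hhe with rfl|rfl|rfl
      · have : s(x,y) = s(y,x) := Sym2.eq_swap
        rw [this]; simp [hF']
      · have : s(x,z) = s(z,x) := Sym2.eq_swap
        rw [this]; simp [hF']
      · exact hsub' hg
  have hreach : ∀ f g : Sym2 V, TriConn G f g → f ∈ Fm → g ∈ Fm := by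
    intro f g h
    induction h with
    | refl => exact id
    | tail _ hstep ih => exact fun hf => hclosed _ (ih hf) _ hstep
  -- Fm is nonempty
  have hFmne : Fm.Nonempty := by
    have h0 : 0 < F0.card := by
      refine card_pos.2 ⟨s(v,a), ?_⟩
      simp [hF0]
    exact card_pos.1 (lt_of_lt_of_le h0 (hmax F0 hF0S))
  obtain ⟨g₀, hg₀⟩ := hFmne
  have hg₀cl : TriConn G e g₀ := (mem_filter.1 (hFmsub hg₀)).2
  have heFm : e ∈ Fm := hreach g₀ e (triConn_symm G hg₀cl) hg₀
  have : cl G e ⊆ Fm := by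
    intro f hf
    exact hreach e f (mem_filter.1 hf).2 heFm
  rw [eq_of_subset_of_card_le this (card_le_card hFmsub)]
  exact hFmg

lemma class_bound (hD : Dense2 G) {e : Sym2 V} (he : e ∈ G.edgeFinset) :
    2 * (supp (cl G e)).card ≤ (cl G e).card + 2 ∧
      ((cl G e).card + 2 = 2 * (supp (cl G e)).card → (supp (cl G e)).card = 4) := by
  by_cases h3 : ∃ v ∈ supp (cl G e), (nbrs (cl G e) v).card = 3
  · obtain ⟨v, hv, hdeg⟩ := h3
    have hg := class_grown hD hv hdeg
    obtain ⟨hineq, heq⟩ := grown_card hg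
    refine ⟨hineq, fun h => ?_⟩
    rcases heq h with h4|⟨w, hw, hle⟩
    · exact h4
    · exact absurd (deg_ge_three hD hw) (by omega)
  · push_neg at h3
    have h4 : ∀ v ∈ supp (cl G e), 4 ≤ (nbrs (cl G e) v).card := by
      intro v hv
      have := deg_ge_three hD hv
      have := h3 v hv
      omega
    have hnd : ∀ f ∈ cl G e, ¬ f.IsDiag := fun f hf =>
      G.not_isDiag_of_mem_edgeSet (SimpleGraph.mem_edgeFinset.1 (cl_subset hf))
    have hhs := handshake hnd
    have hsum : (supp (cl G e)).card * 4 ≤ ∑ v ∈ supp (cl G e), (nbrs (cl G e) v).card := by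
      simpa using card_nsmul_le_sum (supp (cl G e)) _ 4 h4
    have hts : ∑ v ∈ supp (cl G e), (nbrs (cl G e) v).card ≤ ∑ v : V, (nbrs (cl G e) v).card :=
      sum_le_sum_of_subset (subset_univ _)
    constructor
    · omega
    · intro h
      omega

lemma walk_cross {U : Finset V} {u w : V} (p : G.Walk u w) (hu : u ∈ U) (hw : w ∉ U) :
    ∃ a ∈ U, ∃ b, b ∉ U ∧ G.Adj a b := by
  induction p with
  | nil => exact absurd hu hw
  | @cons u' v' w' h p ih =>
    by_cases hv : v' ∈ U
    · exact ih hv hw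
    · exact ⟨u', hu, v', hv, h⟩

lemma exists_cross (hG : G.Connected) {U : Finset V} (hU : U.Nonempty) (hU' : U ≠ univ) :
    ∃ a ∈ U, ∃ b, b ∉ U ∧ G.Adj a b := by
  obtain ⟨u, hu⟩ := hU
  have : ∃ w, w ∉ U := by
    by_contra h
    push_neg at h
    exact hU' (eq_univ_of_forall h)
  obtain ⟨w, hw⟩ := this
  obtain ⟨p⟩ := hG.preconnected u w
  exact walk_cross p hu hw

lemma exists_adj_of_connected (hG : G.Connected) (hcard : 2 ≤ Fintype.card V) (v : V) :
    ∃ w, G.Adj v w := by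
  obtain ⟨w, hw⟩ := Fintype.exists_ne_of_one_lt_card (by omega) v
  obtain ⟨p⟩ := hG.preconnected v w
  cases p with
  | nil => exact absurd rfl hw
  | cons h _ => exact ⟨_, h⟩

/-- covering bound: the supports of the triangle components cover a connected graph
tree-like -/
lemma cover (hG : G.Connected) (hcard : 2 ≤ Fintype.card V) :
    Fintype.card V + (G.edgeFinset.image (fun e => cl G e)).card ≤
      (∑ C ∈ G.edgeFinset.image (fun e => cl G e), (supp C).card) + 1 := by
  set 𝒞 := G.edgeFinset.image (fun e => cl G e) with h𝒞
  have hCne : ∀ C ∈ 𝒞, (supp C).Nonempty := by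
    intro C hC
    obtain ⟨f, hf, rfl⟩ := mem_image.1 hC
    have hfc : f ∈ cl G f := mem_cl_self hf
    induction f with
    | _ a b => exact ⟨a, mem_supp.2 ⟨s(a,b), hfc, by simp⟩⟩
  -- the key extension step
  have key : ∀ k : ℕ, ∀ 𝒟 : Finset (Finset (Sym2 V)), 𝒟 ⊆ 𝒞 → 𝒟.Nonempty →
      ((𝒟.biUnion supp).card + 𝒟.card ≤ (∑ C ∈ 𝒟, (supp C).card) + 1) →
      𝒞.card ≤ 𝒟.card + k →
      (𝒞.biUnion supp).card + 𝒞.card ≤ (∑ C ∈ 𝒞, (supp C).card) + 1 := by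
    intro k
    induction k with
    | zero =>
      intro 𝒟 hsub hne hinv hcard'
      have : 𝒟 = 𝒞 := eq_of_subset_of_card_le hsub (by omega)
      rwa [this] at hinv
    | succ k ih =>
      intro 𝒟 hsub hne hinv hcard'
      by_cases heq : 𝒟 = 𝒞
      · rwa [heq] at hinv
      · -- find a new component meeting the current union
        have hproper : ∃ C', C' ∈ 𝒞 ∧ C' ∉ 𝒟 ∧ (supp C' ∩ 𝒟.biUnion supp).Nonempty := by
          by_cases hU : 𝒟.biUnion supp = univ
          · obtain ⟨C', hC'𝒞, hC'𝒟⟩ := exists_of_ssubset (ssubset_of_subset_of_ne hsub heq)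
            obtain ⟨x, hx⟩ := hCne C' hC'𝒞
            exact ⟨C', hC'𝒞, hC'𝒟, ⟨x, mem_inter.2 ⟨hx, hU ▸ mem_univ x⟩⟩⟩
          · obtain ⟨C₀, hC₀⟩ := hne
            obtain ⟨x₀, hx₀⟩ := hCne C₀ (hsub hC₀)
            have hUne : (𝒟.biUnion supp).Nonempty :=
              ⟨x₀, mem_biUnion.2 ⟨C₀, hC₀, hx₀⟩⟩
            obtain ⟨a, ha, b, hb, hab⟩ := exists_cross hG hUne hU
            have hedge : s(a,b) ∈ G.edgeFinset := by
              rw [SimpleGraph.mem_edgeFinset, SimpleGraph.mem_edgeSet]; exact hab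
            refine ⟨cl G s(a,b), mem_image_of_mem _ hedge, ?_, ?_⟩
            · intro hmem
              have : b ∈ 𝒟.biUnion supp :=
                mem_biUnion.2 ⟨cl G s(a,b), hmem,
                  mem_supp.2 ⟨s(a,b), mem_cl_self hedge, by simp⟩⟩
              exact hb this
            · exact ⟨a, mem_inter.2 ⟨mem_supp.2 ⟨s(a,b), mem_cl_self hedge, by simp⟩, ha⟩⟩
        obtain ⟨C', hC'𝒞, hC'𝒟, hmeet⟩ := hproper
        set 𝒟' := insert C' 𝒟 with h𝒟'
        have hsub' : 𝒟' ⊆ 𝒞 := insert_subset hC'𝒞 hsub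
        have hcard'' : 𝒟'.card = 𝒟.card + 1 := card_insert_of_notMem hC'𝒟
        have hbU : 𝒟'.biUnion supp = supp C' ∪ 𝒟.biUnion supp := biUnion_insert ..
        have hunion : (supp C' ∪ 𝒟.biUnion supp).card + 1 ≤
            (supp C').card + (𝒟.biUnion supp).card := by
          have := card_union_add_card_inter (supp C') (𝒟.biUnion supp)
          have hin : 1 ≤ (supp C' ∩ 𝒟.biUnion supp).card := card_pos.2 hmeet
          omega
        have hsum : ∑ C ∈ 𝒟', (supp C).card = (supp C').card + ∑ C ∈ 𝒟, (supp C).card :=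
          sum_insert hC'𝒟
        refine ih 𝒟' hsub' ⟨C', mem_insert_self _ _⟩ ?_ (by omega)
        rw [hbU, hcard'', hsum]
        omega
  -- start with a single component
  obtain ⟨vx⟩ := hG.nonempty
  obtain ⟨wx, hwx⟩ := exists_adj_of_connected hG hcard vx
  have hedge : s(vx,wx) ∈ G.edgeFinset := by
    rw [SimpleGraph.mem_edgeFinset, SimpleGraph.mem_edgeSet]; exact hwx
  have hC0 : cl G s(vx,wx) ∈ 𝒞 := mem_image_of_mem _ hedge
  have hres := key 𝒞.card {cl G s(vx,wx)} (singleton_subset_iff.2 hC0) ⟨_, mem_singleton_self _⟩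
    (by rw [singleton_biUnion, sum_singleton, card_singleton]) (by omega)
  -- all vertices are covered
  have hcover : 𝒞.biUnion supp = univ := by
    refine eq_univ_of_forall (fun v => ?_)
    obtain ⟨w, hw⟩ := exists_adj_of_connected hG hcard v
    have hedge' : s(v,w) ∈ G.edgeFinset := by
      rw [SimpleGraph.mem_edgeFinset, SimpleGraph.mem_edgeSet]; exact hw
    exact mem_biUnion.2 ⟨cl G s(v,w), mem_image_of_mem _ hedge',
      mem_supp.2 ⟨s(v,w), mem_cl_self hedge', by simp⟩⟩
  rw [hcover] at hres
  simpa [card_univ] using hres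

/-- The main lower bound for connected graphs in which every edge lies on at least
two triangles. -/
theorem main_lower (hG : G.Connected) (hD : Dense2 G) :
    2 * Fintype.card V ≤ G.edgeFinset.card + 2 ∧
      (G.edgeFinset.card + 2 = 2 * Fintype.card V → Fintype.card V % 3 = 1) := by
  by_cases hcard : 2 ≤ Fintype.card V
  · set 𝒞 := G.edgeFinset.image (fun e => cl G e) with h𝒞
    have hfib : ∀ C ∈ 𝒞, G.edgeFinset.filter (fun f => cl G f = C) = C := by
      intro C hC
      obtain ⟨e, he, rfl⟩ := mem_image.1 hC
      ext f
      rw [mem_filter]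
      constructor
      · rintro ⟨hf, hcl⟩
        exact hcl ▸ mem_cl_self hf
      · intro hf
        exact ⟨cl_subset hf, cl_eq_cl hf⟩
    have hm : G.edgeFinset.card = ∑ C ∈ 𝒞, C.card := by
      rw [card_eq_sum_card_fiberwise (f := fun e => cl G e) (t := 𝒞)
        (fun e he => mem_image_of_mem _ he)]
      exact Finset.sum_congr rfl (fun C hC => by rw [hfib C hC])
    have hclass : ∀ C ∈ 𝒞, 2 * (supp C).card ≤ C.card + 2 ∧
        (C.card + 2 = 2 * (supp C).card → (supp C).card = 4) := by
      intro C hC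
      obtain ⟨e, he, rfl⟩ := mem_image.1 hC
      exact class_bound hD he
    have hsum1 : ∑ C ∈ 𝒞, 2 * (supp C).card ≤ ∑ C ∈ 𝒞, (C.card + 2) :=
      Finset.sum_le_sum (fun C hC => (hclass C hC).1)
    have hsum2 : ∑ C ∈ 𝒞, (C.card + 2) = G.edgeFinset.card + 2 * 𝒞.card := by
      rw [Finset.sum_add_distrib, hm, Finset.sum_const, smul_eq_mul]
      ring
    have hcov := cover hG hcard
    rw [← h𝒞] at hcov
    have hS1 : ∑ C ∈ 𝒞, 2 * (supp C).card = 2 * ∑ C ∈ 𝒞, (supp C).card :=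
      (Finset.mul_sum ..).symm
    constructor
    · omega
    · intro heq
      -- all inequalities must be tight
      have htight : ∑ C ∈ 𝒞, 2 * (supp C).card = ∑ C ∈ 𝒞, (C.card + 2) := by omega
      have hterm := (Finset.sum_eq_sum_iff_of_le (fun C hC => (hclass C hC).1)).1 htight
      have hsupp4 : ∀ C ∈ 𝒞, (supp C).card = 4 := by
        intro C hC
        exact (hclass C hC).2 ((hterm C hC).symm)
      have hc6 : ∀ C ∈ 𝒞, C.card = 6 := by
        intro C hC
        have h1 := hterm C hC
        have h2 := hsupp4 C hC
        omega
      have hm6 : G.edgeFinset.card = 6 * 𝒞.card := by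
        rw [hm, Finset.sum_congr rfl hc6, Finset.sum_const, smul_eq_mul]
        ring
      omega
  · -- at most one vertex
    have h1 : Fintype.card V = 1 := by
      have := hG.nonempty
      have : 1 ≤ Fintype.card V := Fintype.card_pos
      omega
    have hempty : G.edgeFinset.card = 0 := by
      rw [card_eq_zero]
      by_contra h
      obtain ⟨f, hf⟩ := nonempty_of_ne_empty h
      induction f with
      | _ a b =>
        have : a ≠ b := G.ne_of_adj (adj_of_mem_edgeFinset hf)
        have : 2 ≤ Fintype.card V := by
          have : ({a, b} : Finset V).card = 2 := card_pair this
          calc 2 = ({a, b} : Finset V).card := this.symm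
            _ ≤ Fintype.card V := by rw [← card_univ]; exact card_le_card (subset_univ _)
        omega
    rw [h1, hempty]
    omega

end Graph



/-- length of the pure chain part -/
def NP (n : ℕ) : ℕ := n - (n - 1) % 3

/-- adjacency of the extremal example: a chain of K4's, with, depending on `n mod 3`,
either nothing, a `K5 - e`, or two K4's glued along an edge at the end -/
def chainAdj (n u v : ℕ) : Prop :=
  u ≠ v ∧ ((max u v ≤ 3 * (min u v / 3) + 3 ∧ max u v < NP n) ∨
    (NP n ≤ max u v ∧ n - 4 ≤ min u v))

instance (n u v : ℕ) : Decidable (chainAdj n u v) := by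
  unfold chainAdj; infer_instance

lemma chainAdj_comm {n u v : ℕ} (h : chainAdj n u v) : chainAdj n v u := by
  unfold chainAdj at *; omega

/-- the extremal graph -/
def cgraph (n : ℕ) : SimpleGraph (Fin n) where
  Adj u v := chainAdj n u.val v.val
  symm := ⟨fun _ _ h => chainAdj_comm h⟩
  loopless := ⟨fun u h => h.1 rfl⟩

instance (n : ℕ) : DecidableRel (cgraph n).Adj := fun u v =>
  inferInstanceAs (Decidable (chainAdj n u.val v.val))

lemma cgraph_adj {n : ℕ} {u v : Fin n} : (cgraph n).Adj u v ↔ chainAdj n u.val v.val :=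
  Iff.rfl

/-- key arithmetic: common neighbours witnesses -/
lemma exists_commons (n : ℕ) (hn : 4 ≤ n) (a b : ℕ) (hb : b < n) (hab : a < b)
    (h : chainAdj n a b) :
    ∃ w1 w2 : ℕ, w1 < n ∧ w2 < n ∧ w1 ≠ w2 ∧
      chainAdj n a w1 ∧ chainAdj n b w1 ∧ chainAdj n a w2 ∧ chainAdj n b w2 := by
  have hNP : NP n = 3 * ((n-1)/3) + 1 := by unfold NP; omega
  have hNPn : NP n ≤ n := by unfold NP; omega
  obtain ⟨hne, hchain | htail⟩ := h
  · -- chain edge inside a K4 block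
    set j := a / 3 with hj
    have hblock : 3*j + 3 < NP n := by omega
    have ha3 : 3*j ≤ a ∧ a ≤ 3*j + 2 := by omega
    have hb3 : 3*j + 1 ≤ b ∧ b ≤ 3*j+3 := by omega
    set w1 := if a = 3*j then (if b = 3*j+1 then 3*j+2 else 3*j+1) else 3*j with hw1
    set w2 := if b = 3*j+3 then (if a = 3*j+2 then 3*j+1 else 3*j+2) else 3*j+3 with hw2
    have hw1b : 3*j ≤ w1 ∧ w1 ≤ 3*j+3 ∧ w1 ≠ a ∧ w1 ≠ b := by
      simp only [hw1]; split_ifs <;> omega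
    have hw2b : 3*j ≤ w2 ∧ w2 ≤ 3*j+3 ∧ w2 ≠ a ∧ w2 ≠ b := by
      simp only [hw2]; split_ifs <;> omega
    have hww : w1 ≠ w2 := by
      simp only [hw1, hw2]; split_ifs <;> omega
    refine ⟨w1, w2, by omega, by omega, hww, ?_, ?_, ?_, ?_⟩ <;>
      · unfold chainAdj
        refine ⟨by omega, Or.inl ⟨?_, ?_⟩⟩ <;> omega
  · -- tail edge
    have hr : 1 ≤ (n-1) % 3 := by
      have : NP n ≤ b := by omega
      unfold NP at this; omega
    have hr2 : (n-1) % 3 ≤ 2 := by omega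
    by_cases hr1 : (n-1) % 3 = 1
    · -- K5 - e : b = n-1, a in {n-4, n-3, n-2}
      have hbv : b = n - 1 := by unfold NP at htail; omega
      have hav : n - 4 ≤ a ∧ a ≤ n - 2 := by unfold NP at htail; omega
      have hn5 : 5 ≤ n := by omega
      by_cases h1 : a = n-4
      · exact ⟨n-3, n-2, by omega, by omega, by omega,
          by unfold chainAdj NP; omega, by unfold chainAdj NP; omega,
          by unfold chainAdj NP; omega, by unfold chainAdj NP; omega⟩
      · by_cases h2 : a = n-3
        · exact ⟨n-4, n-2, by omega, by omega, by omega,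
            by unfold chainAdj NP; omega, by unfold chainAdj NP; omega,
            by unfold chainAdj NP; omega, by unfold chainAdj NP; omega⟩
        · have h3 : a = n-2 := by omega
          exact ⟨n-4, n-3, by omega, by omega, by omega,
            by unfold chainAdj NP; omega, by unfold chainAdj NP; omega,
            by unfold chainAdj NP; omega, by unfold chainAdj NP; omega⟩
    · -- two K4's glued on an edge
      have hr2' : (n-1) % 3 = 2 := by omega
      have hn6 : 6 ≤ n := by omega
      have hbv : n - 2 ≤ b := by unfold NP at htail; omega
      have hav : n - 4 ≤ a := by unfold NP at htail; omega
      by_cases hb2 : b = n - 2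
      · by_cases h1 : a = n-4
        · exact ⟨n-1, n-3, by omega, by omega, by omega,
            by unfold chainAdj NP; omega, by unfold chainAdj NP; omega,
            by unfold chainAdj NP; omega, by unfold chainAdj NP; omega⟩
        · have h2 : a = n-3 := by omega
          exact ⟨n-1, n-4, by omega, by omega, by omega,
            by unfold chainAdj NP; omega, by unfold chainAdj NP; omega,
            by unfold chainAdj NP; omega, by unfold chainAdj NP; omega⟩
      · have hbv' : b = n-1 := by omega
        by_cases ha2 : a = n-2
        · exact ⟨n-3, n-4, by omega, by omega, by omega,
            by unfold chainAdj NP; omega, by unfold chainAdj NP; omega,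
            by unfold chainAdj NP; omega, by unfold chainAdj NP; omega⟩
        · by_cases h1 : a = n-4
          · exact ⟨n-2, n-3, by omega, by omega, by omega,
              by unfold chainAdj NP; omega, by unfold chainAdj NP; omega,
              by unfold chainAdj NP; omega, by unfold chainAdj NP; omega⟩
          · have h2 : a = n-3 := by omega
            exact ⟨n-2, n-4, by omega, by omega, by omega,
              by unfold chainAdj NP; omega, by unfold chainAdj NP; omega,
              by unfold chainAdj NP; omega, by unfold chainAdj NP; omega⟩

lemma cgraph_two_common {n : ℕ} (hn : 4 ≤ n) {u v : Fin n} (h : (cgraph n).Adj u v) :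
    ∃ w1 w2 : Fin n, w1 ≠ w2 ∧ (cgraph n).Adj u w1 ∧ (cgraph n).Adj v w1 ∧
      (cgraph n).Adj u w2 ∧ (cgraph n).Adj v w2 := by
  have hne : u.val ≠ v.val := h.1
  rcases hne.lt_or_gt with hlt | hgt
  · obtain ⟨w1, w2, h1, h2, h3, h4, h5, h6, h7⟩ :=
      exists_commons n hn u.val v.val v.isLt hlt h
    exact ⟨⟨w1, h1⟩, ⟨w2, h2⟩, by simpa [Fin.ext_iff] using h3, h4, h5, h6, h7⟩
  · obtain ⟨w1, w2, h1, h2, h3, h4, h5, h6, h7⟩ :=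
      exists_commons n hn v.val u.val u.isLt hgt (chainAdj_comm h)
    exact ⟨⟨w1, h1⟩, ⟨w2, h2⟩, by simpa [Fin.ext_iff] using h3, h5, h4, h7, h6⟩

lemma cgraph_not5 {n : ℕ} (hn : 4 ≤ n) :
    ∃ u v : Fin n, (cgraph n).Adj u v ∧
      ((cgraph n).neighborSet u ∩ (cgraph n).neighborSet v) ⊆
        {(⟨2, by omega⟩ : Fin n), ⟨3, by omega⟩} := by
  refine ⟨⟨0, by omega⟩, ⟨1, by omega⟩, ?_, ?_⟩
  · show chainAdj n 0 1
    unfold chainAdj NP; omega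
  · rintro w ⟨hw0, hw1⟩
    have h0 : chainAdj n 0 w.val := hw0
    have h1 : chainAdj n 1 w.val := hw1
    have hwlt : w.val < n := w.isLt
    have : w.val = 2 ∨ w.val = 3 := by
      unfold chainAdj NP at h0 h1; omega
    rcases this with h | h
    · exact Or.inl (by simp [Fin.ext_iff, h])
    · exact Or.inr (by simp [Fin.ext_iff, h])

lemma cgraph_reach {n : ℕ} (hn : 4 ≤ n) :
    ∀ k (hk : k < n), (cgraph n).Reachable ⟨k, hk⟩ ⟨0, by omega⟩ := by
  intro k
  induction k with
  | zero => intro hk; exact SimpleGraph.Reachable.refl _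
  | succ k ih =>
    intro hk
    have hadj : (cgraph n).Adj ⟨k+1, hk⟩ ⟨k, by omega⟩ := by
      show chainAdj n (k+1) k
      unfold chainAdj NP; omega
    exact hadj.reachable.trans (ih (by omega))

lemma cgraph_connected {n : ℕ} (hn : 4 ≤ n) : (cgraph n).Connected := by
  rw [SimpleGraph.connected_iff]
  refine ⟨fun u v => ?_, ⟨⟨0, by omega⟩⟩⟩
  have h1 := cgraph_reach hn u.val u.isLt
  have h2 := cgraph_reach hn v.val v.isLt
  simpa using h1.trans h2.symm

/-! ### Edge count machinery -/

def toPair {n : ℕ} : Sym2 (Fin n) → Fin n × Fin n :=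
  Sym2.lift ⟨fun a b => if a ≤ b then (b, a) else (a, b), by
    intro a b
    dsimp only
    rcases le_or_gt a b with h | h
    · rcases eq_or_lt_of_le h with rfl | h'
      · simp
      · rw [if_pos h, if_neg (not_le.2 h')]
    · rw [if_neg (not_le.2 h), if_pos h.le]⟩

lemma card_edgeFinset_eq {n : ℕ} (G : SimpleGraph (Fin n)) [DecidableRel G.Adj] :
    G.edgeFinset.card =
      (univ.filter (fun p : Fin n × Fin n => p.2 < p.1 ∧ G.Adj p.1 p.2)).card := by
  refine card_bij' (fun e _ => toPair e) (fun p _ => s(p.1, p.2)) ?_ ?_ ?_ ?_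
  · intro e he
    induction e with
    | _ a b =>
      have hadj : G.Adj a b := by
        rwa [SimpleGraph.mem_edgeFinset, SimpleGraph.mem_edgeSet] at he
      have hne : a ≠ b := G.ne_of_adj hadj
      rw [mem_filter]
      dsimp only [toPair]
      rw [Sym2.lift_mk]
      dsimp only
      rcases le_or_gt a b with h | h
      · rw [if_pos h]
        exact ⟨mem_univ _, lt_of_le_of_ne h hne, hadj.symm⟩
      · rw [if_neg (not_le.2 h)]
        exact ⟨mem_univ _, h, hadj⟩
  · intro p hp
    rw [mem_filter] at hp
    rw [SimpleGraph.mem_edgeFinset, SimpleGraph.mem_edgeSet]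
    exact hp.2.2
  · intro e he
    induction e with
    | _ a b =>
      dsimp only [toPair]
      rw [Sym2.lift_mk]
      dsimp only
      rcases le_or_gt a b with h | h
      · rw [if_pos h]; exact Sym2.eq_swap
      · rw [if_neg (not_le.2 h)]
  · intro p hp
    rw [mem_filter] at hp
    obtain ⟨p1, p2⟩ := p
    dsimp only [toPair]
    rw [Sym2.lift_mk]
    dsimp only
    rw [if_neg (not_le.2 hp.2.1)]

lemma pairs_card_eq_sum {n : ℕ} (G : SimpleGraph (Fin n)) [DecidableRel G.Adj] :
    (univ.filter (fun p : Fin n × Fin n => p.2 < p.1 ∧ G.Adj p.1 p.2)).card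
      = ∑ v : Fin n, (univ.filter (fun u : Fin n => u < v ∧ G.Adj v u)).card := by
  rw [card_eq_sum_card_fiberwise (f := Prod.fst) (t := univ) (fun x _ => mem_univ _)]
  refine Finset.sum_congr rfl fun v _ => ?_
  have heq : (univ.filter (fun p : Fin n × Fin n => p.2 < p.1 ∧ G.Adj p.1 p.2)).filter
      (fun p => p.1 = v) =
      ((univ.filter (fun u : Fin n => u < v ∧ G.Adj v u)).image fun u => (v, u)) := by
    ext ⟨x, y⟩
    simp only [mem_filter, mem_univ, true_and, mem_image]
    constructor
    · rintro ⟨⟨h1, h2⟩, rfl⟩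
      exact ⟨y, ⟨h1, h2⟩, rfl⟩
    · rintro ⟨u, ⟨h1, h2⟩, h⟩
      obtain ⟨rfl, rfl⟩ := Prod.mk.injEq .. ▸ h
      exact ⟨⟨h1, h2⟩, rfl⟩
  rw [heq, card_image_of_injective _ fun a b h => (Prod.mk.injEq .. ▸ h).2]

lemma card_filter_val {n : ℕ} (s : Finset ℕ) (hs : ∀ m ∈ s, m < n) :
    (univ.filter (fun u : Fin n => u.val ∈ s)).card = s.card := by
  refine card_bij' (fun u _ => u.val) (fun m hm => ⟨m, hs m hm⟩) ?_ ?_ ?_ ?_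
  · intro u hu; exact (mem_filter.1 hu).2
  · intro m hm; simp [hm]
  · intro u _; rfl
  · intro m _; rfl

lemma cgraph_fiber {n : ℕ} (hn : 4 ≤ n) (v : Fin n) :
    (univ.filter (fun u : Fin n => u < v ∧ (cgraph n).Adj v u)).card
      = v.val - (if v.val < NP n then 3*((v.val-1)/3) else n-4) := by
  have hset : (univ.filter (fun u : Fin n => u < v ∧ (cgraph n).Adj v u)) =
      univ.filter (fun u : Fin n =>
        u.val ∈ Finset.Ico (if v.val < NP n then 3*((v.val-1)/3) else n-4) v.val) := by
    ext u
    simp only [mem_filter, mem_univ, true_and, Finset.mem_Ico, Fin.lt_def]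
    have hchar : (u.val < v.val ∧ chainAdj n v.val u.val) ↔
        ((if v.val < NP n then 3*((v.val-1)/3) else n-4) ≤ u.val ∧ u.val < v.val) := by
      unfold chainAdj NP
      have := v.isLt
      split_ifs <;> omega
    exact hchar
  rw [hset, card_filter_val _ (fun m hm => lt_trans (Finset.mem_Ico.1 hm).2 v.isLt),
    Nat.card_Ico]

lemma chainSum : ∀ K : ℕ, ∑ k ∈ range (3*K+1), (k - 3*((k-1)/3)) = 6*K := by
  intro K
  induction K with
  | zero => simp
  | succ K ih =>
    have h : 3*(K+1)+1 = (3*K+1) + 1 + 1 + 1 := by ring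
    rw [h, sum_range_succ, sum_range_succ, sum_range_succ, ih]
    have e1 : (3*K+1) - 3*((3*K+1-1)/3) = 1 := by omega
    have e2 : (3*K+1+1) - 3*((3*K+1+1-1)/3) = 2 := by omega
    have e3 : (3*K+1+1+1) - 3*((3*K+1+1+1-1)/3) = 3 := by omega
    omega

lemma cgraph_count {n : ℕ} (hn : 4 ≤ n) :
    (cgraph n).edgeFinset.card = if n % 3 = 1 then 2*n-2 else 2*n-1 := by
  rw [card_edgeFinset_eq, pairs_card_eq_sum,
    Finset.sum_congr rfl (fun v _ => cgraph_fiber hn v),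
    Fin.sum_univ_eq_sum_range (fun k => k - (if k < NP n then 3*((k-1)/3) else n-4)) n]
  have hNPn : NP n ≤ n := by unfold NP; omega
  have hNP : NP n = 3*((n-1)/3) + 1 := by unfold NP; omega
  rw [Finset.range_eq_Ico, ← Finset.sum_Ico_consecutive _ (Nat.zero_le (NP n)) hNPn]
  have hc : ∑ k ∈ Finset.Ico 0 (NP n), (k - (if k < NP n then 3*((k-1)/3) else n-4))
      = 6*((n-1)/3) := by
    rw [← Finset.range_eq_Ico]
    rw [Finset.sum_congr rfl (fun k hk => by rw [if_pos (mem_range.1 hk)])]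
    rw [hNP]
    exact chainSum ((n-1)/3)
  have ht : ∑ k ∈ Finset.Ico (NP n) n, (k - (if k < NP n then 3*((k-1)/3) else n-4))
      = ∑ k ∈ Finset.range (n - NP n), ((NP n + k) - (n-4)) := by
    rw [Finset.sum_congr rfl (fun k hk => by
      rw [if_neg (not_lt.2 (Finset.mem_Ico.1 hk).1)])]
    exact Finset.sum_Ico_eq_sum_range _ _ _
  rw [hc, ht]
  have hr : n - NP n = (n-1) % 3 := by unfold NP; omega
  rcases (show (n-1)%3 = 0 ∨ (n-1)%3 = 1 ∨ (n-1)%3 = 2 by omega) with h|h|h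
  · rw [hr, h]
    simp only [Finset.range_zero, Finset.sum_empty]
    rw [if_pos (by omega : n % 3 = 1)]
    omega
  · rw [hr, h, Finset.sum_range_one]
    rw [if_neg (by omega : ¬ n % 3 = 1)]
    unfold NP
    omega
  · rw [hr, h, Finset.sum_range_succ, Finset.sum_range_one]
    rw [if_neg (by omega : ¬ n % 3 = 1)]
    unfold NP
    omega


section Glue

open scoped Classical

/-- The lower bound, specialized. -/
theorem lower_of_kDense {n : ℕ} (hn : 4 ≤ n) (G : SimpleGraph (Fin n))
    (hconn : G.Connected) (hk4 : kDense G 4) :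
    (if n % 3 = 1 then 2 * n - 2 else 2 * n - 1) ≤ G.edgeSet.ncard := by
  have hD : Dense2 G := by
    intro u v huv
    have h2 := hk4 u v huv
    norm_num at h2
    rw [Set.ncard_eq_toFinset_card'] at h2
    obtain ⟨a, ha, b, hb, hab⟩ := Finset.one_lt_card.1
      (show 1 < (G.neighborSet u ∩ G.neighborSet v).toFinset.card by omega)
    rw [Set.mem_toFinset] at ha hb
    refine Finset.one_lt_card.2 ⟨a, ?_, b, ?_, hab⟩
    · exact mem_inter.2 ⟨(G.mem_neighborFinset ..).2 ha.1, (G.mem_neighborFinset ..).2 ha.2⟩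
    · exact mem_inter.2 ⟨(G.mem_neighborFinset ..).2 hb.1, (G.mem_neighborFinset ..).2 hb.2⟩
  have hmain := main_lower hconn hD
  rw [Fintype.card_fin] at hmain
  have h1 : G.edgeSet.ncard = G.edgeFinset.card := Set.ncard_eq_toFinset_card' _
  rw [h1]
  obtain ⟨hineq, heq⟩ := hmain
  by_cases hm : G.edgeFinset.card + 2 = 2*n
  · have := heq hm
    rw [if_pos this]
    omega
  · split_ifs with h
    · omega
    · omega

end Glue

section Membership

theorem cgraph_kDense4 {n : ℕ} (hn : 4 ≤ n) : kDense (cgraph n) 4 := by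
  intro u v huv
  obtain ⟨w1, w2, hne, h1, h2, h3, h4⟩ := cgraph_two_common hn huv
  have hsub : ({w1, w2} : Set (Fin n)) ⊆
      (cgraph n).neighborSet u ∩ (cgraph n).neighborSet v := by
    rintro w (rfl | rfl)
    · exact ⟨h1, h2⟩
    · exact ⟨h3, h4⟩
  calc (4:ℕ) - 2 = ({w1, w2} : Set (Fin n)).ncard := by rw [Set.ncard_pair hne]
    _ ≤ _ := Set.ncard_le_ncard hsub (Set.toFinite _)

theorem cgraph_not_kDense5 {n : ℕ} (hn : 4 ≤ n) : ¬ kDense (cgraph n) (4 + 1) := by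
  intro hk
  obtain ⟨u, v, huv, hsub⟩ := cgraph_not5 hn
  have h3 := hk u v huv
  norm_num at h3
  have hle : ((cgraph n).neighborSet u ∩ (cgraph n).neighborSet v).ncard ≤ 2 := by
    refine le_trans (Set.ncard_le_ncard hsub (Set.toFinite _)) ?_
    refine le_trans (Set.ncard_insert_le _ _) ?_
    simp
  omega

theorem cgraph_ncard {n : ℕ} (hn : 4 ≤ n) :
    (cgraph n).edgeSet.ncard = if n % 3 = 1 then 2*n-2 else 2*n-1 := by
  have h1 : (cgraph n).edgeSet.ncard = (cgraph n).edgeFinset.card :=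
    Set.ncard_eq_toFinset_card' _
  rw [h1, cgraph_count hn]

end Membership

end FourDenseProof

/-- The minimum number of edges of a connected 4*-dense graph on n ≥ 4 vertices is
2n − 2 if n ≡ 1 (mod 3) and 2n − 1 otherwise. -/
theorem min_edges_fourStarDense (n : ℕ) (hn : 4 ≤ n) :
    IsLeast {m : ℕ | ∃ G : SimpleGraph (Fin n),
        G.Connected ∧ kStarDense G 4 ∧ G.edgeSet.ncard = m}
      (if n % 3 = 1 then 2 * n - 2 else 2 * n - 1) := by
  constructor
  · exact ⟨FourDenseProof.cgraph n, FourDenseProof.cgraph_connected hn,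
      ⟨FourDenseProof.cgraph_kDense4 hn, FourDenseProof.cgraph_not_kDense5 hn⟩,
      FourDenseProof.cgraph_ncard hn⟩
  · rintro m ⟨G, hconn, ⟨hk4, -⟩, rfl⟩
    exact FourDenseProof.lower_of_kDense hn G hconn hk4
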